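/- Let n_1 ≤ n_2 ≤ ⋯ ≤ n_d and let Φ : ℓ_2^{n_1} ⊗_ε ⋯ ⊗_ε ℓ_2^{n_d} → ℓ_2^{n_1⋯n_d} be the natural identification. Then ‖Φ‖ ≤ (n_1 ⋯ n_{d-1})^{1/2}, i.e. for every tensor T, its Hilbert–Schmidt (Euclidean) norm is at most (n_1⋯n_{d-1})^{1/2} times its injective tensor norm. -/

import Mathlib

private lemma sum_cons_split {m : ℕ} (n : Fin (m+1) → ℕ)
    (F : ((j : Fin (m+1)) → Fin (n j)) → ℝ) :
    ∑ f, F f = ∑ i : Fin (n 0), ∑ g : (j : Fin m) → Fin (n j.succ), F (Fin.cons i g) := by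
  rw [← (Fin.consEquiv (fun j => Fin (n j))).sum_comp, Fintype.sum_prod_type]; rfl

private lemma aux : ∀ (m : ℕ) (n : Fin (m + 1) → ℕ)
    (T : ((j : Fin (m + 1)) → Fin (n j)) → ℝ) (C : ℝ),
    (∀ x : (j : Fin (m + 1)) → (Fin (n j) → ℝ),
      (∀ j, ∑ v, x j v ^ 2 ≤ 1) →
      |∑ f : (j : Fin (m + 1)) → Fin (n j), T f * ∏ j, x j (f j)| ≤ C) →
    (∑ f, T f ^ 2) ≤ (∏ j : Fin m, (n j.castSucc : ℝ)) * C ^ 2 := by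
  intro m
  induction m with
  | zero =>
    intro n T C hC
    simp only [Finset.univ_eq_empty, Finset.prod_empty, one_mul]
    set S := ∑ f : (j : Fin 1) → Fin (n j), T f ^ 2 with hSdef
    have hS : 0 ≤ S := Finset.sum_nonneg fun f _ => sq_nonneg _
    rcases eq_or_lt_of_le hS with h0 | hpos
    · rw [← h0]; positivity
    · set s := Real.sqrt S with hsdef
      have hs : 0 < s := Real.sqrt_pos.2 hpos
      have hss : s * s = S := Real.mul_self_sqrt hS
      set x : (j : Fin 1) → Fin (n j) → ℝ :=
        Fin.cons (fun v => T (Fin.cons v default) / s) default with hxdef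
      have hcons : ∀ f : (j : Fin 1) → Fin (n j), Fin.cons (f 0) default = f := by
        intro f; funext j
        refine Fin.cases ?_ (fun i => i.elim0) j
        simp
      have hsplit : S = ∑ v : Fin (n 0), T (Fin.cons v default) ^ 2 := by
        rw [hSdef, sum_cons_split]
        congr 1
        funext i
        rw [Fintype.sum_unique]
      have hx : ∀ j, ∑ v, x j v ^ 2 ≤ 1 := by
        refine Fin.cases ?_ (fun i => i.elim0)
        simp only [hxdef, Fin.cons_zero, div_pow]
        rw [← Finset.sum_div, ← hsplit, ← hss]
        rw [div_le_one (by positivity)]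
        nlinarith [hss, hpos]
      have hkey : ∑ f : (j : Fin 1) → Fin (n j), T f * ∏ j, x j (f j) = s := by
        have : ∀ f : (j : Fin 1) → Fin (n j),
            T f * ∏ j, x j (f j) = T f ^ 2 / s := by
          intro f
          rw [Fin.prod_univ_one]
          simp only [hxdef, Fin.cons_zero]
          rw [hcons f]
          ring
        rw [Finset.sum_congr rfl fun f _ => this f, ← Finset.sum_div, ← hSdef]
        rw [← hss]; field_simp
      have := hC x hx
      rw [hkey, abs_of_pos hs] at this
      calc S = s * s := hss.symm
        _ ≤ C * C := mul_le_mul this this hs.le (hs.le.trans this)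
        _ = C ^ 2 := by ring
  | succ m IH =>
    intro n T C hC
    set n' : Fin (m + 1) → ℕ := fun j => n j.succ with hn'
    have hC' : ∀ i : Fin (n 0),
        (∀ x' : (j : Fin (m + 1)) → (Fin (n' j) → ℝ),
          (∀ j, ∑ v, x' j v ^ 2 ≤ 1) →
          |∑ g : (j : Fin (m + 1)) → Fin (n' j),
            T (Fin.cons i g) * ∏ j, x' j (g j)| ≤ C) := by
      intro i x' hx'
      set x : (j : Fin (m + 2)) → Fin (n j) → ℝ :=
        Fin.cons (fun v => if v = i then 1 else 0) x' with hxdef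
      have hx : ∀ j, ∑ v, x j v ^ 2 ≤ 1 := by
        refine Fin.cases ?_ ?_
        · have hterm : ∀ v : Fin (n 0), x 0 v ^ 2 = if v = i then (1:ℝ) else 0 := by
            intro v; simp only [hxdef, Fin.cons_zero]; split <;> norm_num
          rw [Finset.sum_congr rfl fun v _ => hterm v,
            Finset.sum_ite_eq' Finset.univ i fun _ => (1:ℝ)]
          simp
        · intro j
          simpa only [hxdef, Fin.cons_succ] using hx' j
      have key : ∑ f : (j : Fin (m + 2)) → Fin (n j), T f * ∏ j, x j (f j)
          = ∑ g : (j : Fin (m + 1)) → Fin (n' j),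
              T (Fin.cons i g) * ∏ j, x' j (g j) := by
        rw [sum_cons_split n (fun f => T f * ∏ j, x j (f j))]
        simp only [Fin.prod_univ_succ, Fin.cons_zero, Fin.cons_succ, hxdef]
        rw [Finset.sum_eq_single_of_mem i (Finset.mem_univ i)
          (fun i' _ hne => by simp [hne])]
        simp
        rfl
      have := hC x hx
      rwa [key] at this
    have hslice : ∀ i : Fin (n 0),
        (∑ g : (j : Fin (m + 1)) → Fin (n' j), T (Fin.cons i g) ^ 2)
          ≤ (∏ j : Fin m, (n' j.castSucc : ℝ)) * C ^ 2 :=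
      fun i => IH n' (fun g => T (Fin.cons i g)) C (hC' i)
    calc ∑ f : (j : Fin (m + 2)) → Fin (n j), T f ^ 2
        = ∑ i : Fin (n 0), ∑ g : (j : Fin (m + 1)) → Fin (n' j),
            T (Fin.cons i g) ^ 2 := sum_cons_split n (fun f => T f ^ 2)
      _ ≤ ∑ _i : Fin (n 0), (∏ j : Fin m, (n' j.castSucc : ℝ)) * C ^ 2 :=
          Finset.sum_le_sum fun i _ => hslice i
      _ = (n 0 : ℝ) * ((∏ j : Fin m, (n' j.castSucc : ℝ)) * C ^ 2) := by
          simp [Finset.sum_const, mul_comm]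
      _ = (∏ j : Fin (m + 1), (n j.castSucc : ℝ)) * C ^ 2 := by
          rw [Fin.prod_univ_succ]
          simp only [hn', Fin.castSucc_zero, Fin.succ_castSucc]
          ring

theorem stmt12 (m : ℕ) (n : Fin (m + 1) → ℕ) (hmono : Monotone n)
    (T : ((j : Fin (m + 1)) → Fin (n j)) → ℝ) (C : ℝ)
    (hC : ∀ x : (j : Fin (m + 1)) → (Fin (n j) → ℝ),
      (∀ j, ∑ v, x j v ^ 2 ≤ 1) →
      |∑ f : (j : Fin (m + 1)) → Fin (n j), T f * ∏ j, x j (f j)| ≤ C) :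
    Real.sqrt (∑ f : (j : Fin (m + 1)) → Fin (n j), T f ^ 2) ≤
      Real.sqrt (∏ j : Fin m, (n j.castSucc : ℝ)) * C := by
  have hC0 : 0 ≤ C := by
    have := hC (fun _ _ => 0) (by simp)
    simpa using this.trans' (abs_nonneg _)
  have h := aux m n T C hC
  have hP : 0 ≤ ∏ j : Fin m, (n j.castSucc : ℝ) :=
    Finset.prod_nonneg fun j _ => by positivity
  calc Real.sqrt (∑ f : (j : Fin (m + 1)) → Fin (n j), T f ^ 2)
      ≤ Real.sqrt ((∏ j : Fin m, (n j.castSucc : ℝ)) * C ^ 2) := Real.sqrt_le_sqrt h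
    _ = Real.sqrt (∏ j : Fin m, (n j.castSucc : ℝ)) * C := by
        rw [Real.sqrt_mul hP, Real.sqrt_sq hC0]
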